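/- For every n ≥ 1, the difference formula β_{n,λ}^{(p)}(x+1) - β_{n,λ}^{(p)}(x) = Σ_{k=0}^{n-1} C(n,k) β_{k,λ}^{(p)}(x) (1)_{n-k,λ} holds. -/

import Mathlib

open Finset PowerSeries

noncomputable section

/-- The generalized (degenerate) falling factorial `(x)_{n,λ} = ∏_{j<n} (x - jλ)`. -/
def dfall (x : ℝ) (n : ℕ) (lam : ℝ) : ℝ := ∏ j ∈ Finset.range n, (x - j * lam)

/-- The degenerate exponential `e_λ^x(t) = Σ_{n≥0} (x)_{n,λ} t^n / n!` as a formal power series. -/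
def degExp (lam x : ℝ) : PowerSeries ℝ :=
  PowerSeries.mk fun n => dfall x n lam / n.factorial

/-- The degenerate Stirling numbers of the second kind, defined by
`(1/k!)(e_λ(t)-1)^k = Σ_{n≥k} S_{2,λ}(n,k) t^n/n!`. -/
def S2 (lam : ℝ) (n k : ℕ) : ℝ :=
  (n.factorial : ℝ) / (k.factorial : ℝ) * PowerSeries.coeff n ((degExp lam 1 - 1) ^ k)

/-- The degenerate Stirling polynomials of the second kind, defined by
`(1/k!)(e_λ(t)-1)^k e_λ^x(t) = Σ_{n≥k} S_{2,λ}(n,k|x) t^n/n!`. -/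
def S2p (lam : ℝ) (n k : ℕ) (x : ℝ) : ℝ :=
  (n.factorial : ℝ) / (k.factorial : ℝ) *
    PowerSeries.coeff n ((degExp lam 1 - 1) ^ k * degExp lam x)

/-- The degenerate logarithm `log_λ(1+t) = Σ_{n≥1} λ^{n-1}(1)_{n,1/λ} t^n/n!`. -/
def degLog (lam : ℝ) : PowerSeries ℝ :=
  PowerSeries.mk fun n => if n = 0 then 0 else lam ^ (n - 1) * dfall 1 n (1 / lam) / n.factorial

/-- The degenerate Stirling numbers of the first kind, defined by
`(1/k!)(log_λ(1+t))^k = Σ_{n≥k} S_{1,λ}(n,k) t^n/n!`. -/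
def S1 (lam : ℝ) (n k : ℕ) : ℝ :=
  (n.factorial : ℝ) / (k.factorial : ℝ) * PowerSeries.coeff n ((degLog lam) ^ k)

/-- Rising factorial `⟨a⟩_k = a(a+1)⋯(a+k-1)`. -/
def rising (a : ℝ) (k : ℕ) : ℝ := ∏ j ∈ Finset.range k, (a + j)

/-- The generalized degenerate Bernoulli polynomials `β_{n,λ}^{(p)}(x)`, defined by
`Σ_{n≥0} β_{n,λ}^{(p)}(x) t^n/n! = ₂F₁(1-λ,1;p+2;1-e_λ(t)) e_λ^x(t)`.
Since `1 - e_λ(t)` has zero constant term, the coefficient of `t^n` in the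
hypergeometric series only involves the terms with `k ≤ n`. -/
def genBetaPoly (lam : ℝ) (p : ℤ) (x : ℝ) (n : ℕ) : ℝ :=
  (n.factorial : ℝ) * PowerSeries.coeff n
    ((∑ k ∈ Finset.range (n + 1),
        (rising (1 - lam) k * rising 1 k / (rising ((p : ℝ) + 2) k * k.factorial)) •
          ((1 - degExp lam 1) ^ k)) * degExp lam x)

/-- The generalized degenerate Bernoulli numbers `β_{n,λ}^{(p)} = β_{n,λ}^{(p)}(0)`. -/
def genBeta (lam : ℝ) (p : ℤ) (n : ℕ) : ℝ := genBetaPoly lam p 0 n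

/-- The degenerate type Eulerian numbers, defined by
`(-1)^{n-m} A_λ(n,m) = Σ_{k=0}^{n-m} λ^k (1)_{k+1,1/λ} C(n-k,m) S_{2,λ}(n,k)`. -/
def Eul (lam : ℝ) (n m : ℕ) : ℝ :=
  (-1 : ℝ) ^ (n - m) * ∑ k ∈ Finset.range (n - m + 1),
    lam ^ k * dfall 1 (k + 1) (1 / lam) * ((n - k).choose m : ℝ) * S2 lam n k

lemma dfall_zero (x lam : ℝ) : dfall x 0 lam = 1 := by simp [dfall]

lemma dfall_succ (x lam : ℝ) (n : ℕ) : dfall x (n+1) lam = dfall x n lam * (x - n * lam) := by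
  simp [dfall, Finset.prod_range_succ]

lemma dfall_add (x y lam : ℝ) (n : ℕ) :
    dfall (x + y) n lam = ∑ k ∈ Finset.range (n+1),
      (n.choose k : ℝ) * dfall x k lam * dfall y (n-k) lam := by
  induction n with
  | zero => simp [dfall]
  | succ n ih =>
    rw [dfall_succ, ih, Finset.sum_mul]
    have key : ∀ k ∈ Finset.range (n+1),
        (n.choose k : ℝ) * dfall x k lam * dfall y (n-k) lam * (x + y - n * lam)
        = (n.choose k : ℝ) * dfall x (k+1) lam * dfall y (n-k) lam
          + (n.choose k : ℝ) * dfall x k lam * dfall y (n-k+1) lam := by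
      intro k hk
      have hk' : k ≤ n := Nat.lt_succ_iff.mp (Finset.mem_range.mp hk)
      have hcast : ((n - k : ℕ) : ℝ) = (n : ℝ) - k := by
        push_cast [Nat.cast_sub hk']; ring
      rw [dfall_succ, dfall_succ, hcast]
      ring
    rw [Finset.sum_congr rfl key, Finset.sum_add_distrib]
    -- target: ... = ∑ k ∈ range (n+2), C(n+1,k) dfall x k * dfall y (n+1-k)
    rw [Finset.sum_range_succ' (fun j => ((n+1).choose j : ℝ) * dfall x j lam * dfall y (n+1-j) lam)]
    have hsplit : ∀ i ∈ Finset.range (n+1),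
        (((n+1).choose (i+1) : ℝ)) * dfall x (i+1) lam * dfall y (n+1-(i+1)) lam
        = (n.choose i : ℝ) * dfall x (i+1) lam * dfall y (n-i) lam
          + (n.choose (i+1) : ℝ) * dfall x (i+1) lam * dfall y (n-i) lam := by
      intro i hi
      rw [Nat.choose_succ_succ n i]
      push_cast
      ring
    rw [Finset.sum_congr rfl hsplit, Finset.sum_add_distrib]
    have h2 : (∑ i ∈ Finset.range (n+1), (n.choose (i+1) : ℝ) * dfall x (i+1) lam * dfall y (n-i) lam)
        + ((n+1).choose 0 : ℝ) * dfall x 0 lam * dfall y (n+1-0) lam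
        = ∑ k ∈ Finset.range (n+1), (n.choose k : ℝ) * dfall x k lam * dfall y (n-k+1) lam := by
      rw [Finset.sum_range_succ' (fun k => (n.choose k : ℝ) * dfall x k lam * dfall y (n-k+1) lam)]
      rw [Finset.sum_range_succ]
      simp only [Nat.choose_succ_self, Nat.cast_zero, zero_mul, add_zero, Nat.choose_zero_right,
        Nat.cast_one, one_mul, Nat.sub_zero]
      congr 1
      apply Finset.sum_congr rfl
      intro i hi
      have hlt : i < n := Finset.mem_range.mp hi
      have : n - (i+1) + 1 = n - i := by omega
      rw [this]
    rw [← h2]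
    ring

lemma degExp_mul (lam x y : ℝ) : degExp lam (x + y) = degExp lam x * degExp lam y := by
  ext n
  rw [PowerSeries.coeff_mul, Finset.Nat.sum_antidiagonal_eq_sum_range_succ_mk]
  simp only [degExp, PowerSeries.coeff_mk]
  rw [dfall_add, Finset.sum_div]
  apply Finset.sum_congr rfl
  intro k hk
  have hk' : k ≤ n := Nat.lt_succ_iff.mp (Finset.mem_range.mp hk)
  have hfac : (n.choose k : ℝ) * k.factorial * (n-k).factorial = n.factorial := by
    exact_mod_cast congrArg (Nat.cast : ℕ → ℝ) (Nat.choose_mul_factorial_mul_factorial hk')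
  have h1 : (k.factorial : ℝ) ≠ 0 := Nat.cast_ne_zero.mpr k.factorial_ne_zero
  have h2 : ((n-k).factorial : ℝ) ≠ 0 := Nat.cast_ne_zero.mpr (n-k).factorial_ne_zero
  have h3 : (n.factorial : ℝ) ≠ 0 := Nat.cast_ne_zero.mpr n.factorial_ne_zero
  field_simp
  rw [← hfac]
  ring

lemma const_one_sub : PowerSeries.constantCoeff (1 - degExp lam 1) = 0 := by
  rw [map_sub, map_one, ← PowerSeries.coeff_zero_eq_constantCoeff_apply]
  simp [degExp, dfall_zero]

lemma coeff_pow_mul_eq_zero {G : PowerSeries ℝ} {m k : ℕ} (h : m < k) :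
    PowerSeries.coeff m ((1 - degExp lam 1) ^ k * G) = 0 := by
  have hX : (PowerSeries.X : PowerSeries ℝ) ∣ (1 - degExp lam 1) :=
    PowerSeries.X_dvd_iff.mpr const_one_sub
  have : (PowerSeries.X : PowerSeries ℝ) ^ k ∣ (1 - degExp lam 1) ^ k * G :=
    Dvd.dvd.mul_right (pow_dvd_pow_of_dvd hX k) G
  exact PowerSeries.X_pow_dvd_iff.mp this m h

lemma trunc (c : ℕ → ℝ) (G : PowerSeries ℝ) {m N : ℕ} (h : m ≤ N) :
    PowerSeries.coeff m ((∑ k ∈ Finset.range (N+1), c k • (1 - degExp lam 1)^k) * G)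
    = PowerSeries.coeff m ((∑ k ∈ Finset.range (m+1), c k • (1 - degExp lam 1)^k) * G) := by
  have hz : PowerSeries.coeff m
      ((∑ k ∈ Finset.Ico (m+1) (N+1), c k • (1 - degExp lam 1)^k) * G) = 0 := by
    rw [Finset.sum_mul, map_sum]
    apply Finset.sum_eq_zero
    intro k hk
    have hm : m < k := (Finset.mem_Ico.mp hk).1
    rw [smul_mul_assoc, map_smul, coeff_pow_mul_eq_zero hm, smul_zero]
  rw [← Finset.sum_range_add_sum_Ico _ (by omega : m+1 ≤ N+1), add_mul, map_add, hz, add_zero]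

def Fser (lam : ℝ) (p : ℤ) (n : ℕ) : PowerSeries ℝ :=
  ∑ k ∈ Finset.range (n + 1),
    (rising (1 - lam) k * rising 1 k / (rising ((p : ℝ) + 2) k * k.factorial)) •
      ((1 - degExp lam 1) ^ k)

lemma genBetaPoly_def' (lam : ℝ) (p : ℤ) (x : ℝ) (n : ℕ) :
    genBetaPoly lam p x n
      = (n.factorial : ℝ) * PowerSeries.coeff n (Fser lam p n * degExp lam x) := rfl

lemma genBetaPoly_eq (lam : ℝ) (p : ℤ) (x : ℝ) (k N : ℕ) (h : k ≤ N) :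
    genBetaPoly lam p x k
      = (k.factorial : ℝ) * PowerSeries.coeff k (Fser lam p N * degExp lam x) := by
  rw [genBetaPoly_def', Fser, Fser,
    trunc (fun j => rising (1 - lam) j * rising 1 j / (rising ((p : ℝ) + 2) j * j.factorial))
      (degExp lam x) h]

theorem stmt18 (lam : ℝ) (p : ℤ) (hp : -1 ≤ p) (x : ℝ) (n : ℕ) (hn : 1 ≤ n) :
    genBetaPoly lam p (x + 1) n - genBetaPoly lam p x n =
      ∑ k ∈ Finset.range n,
        (n.choose k : ℝ) * genBetaPoly lam p x k * dfall 1 (n - k) lam := by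
  have h1 : genBetaPoly lam p (x+1) n - genBetaPoly lam p x n
      = (n.factorial : ℝ) * PowerSeries.coeff n
          ((Fser lam p n * degExp lam x) * (degExp lam 1 - 1)) := by
    rw [genBetaPoly_def', genBetaPoly_def', degExp_mul lam x 1, ← mul_sub, ← map_sub]
    congr 2
    ring
  rw [h1, PowerSeries.coeff_mul, Finset.Nat.sum_antidiagonal_eq_sum_range_succ_mk,
    Finset.sum_range_succ]
  have hz : PowerSeries.coeff (n - n) (degExp lam 1 - 1) = 0 := by
    simp only [Nat.sub_self, map_sub, PowerSeries.coeff_zero_eq_constantCoeff, map_one]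
    simp [degExp, dfall_zero]
  rw [hz, mul_zero, add_zero, Finset.mul_sum]
  apply Finset.sum_congr rfl
  intro k hk
  have hkn : k < n := Finset.mem_range.mp hk
  have hco : PowerSeries.coeff (n - k) (degExp lam 1 - 1)
      = dfall 1 (n - k) lam / (n - k).factorial := by
    rw [map_sub]
    have : PowerSeries.coeff (n - k) (1 : PowerSeries ℝ) = 0 := by
      rw [PowerSeries.coeff_one, if_neg (by omega)]
    rw [this, sub_zero]
    simp [degExp]
  rw [hco, genBetaPoly_eq lam p x k n (le_of_lt hkn)]
  have hfac : (n.choose k : ℝ) * k.factorial * (n - k).factorial = n.factorial := by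
    exact_mod_cast congrArg (Nat.cast : ℕ → ℝ) (Nat.choose_mul_factorial_mul_factorial hkn.le)
  have h2 : ((n - k).factorial : ℝ) ≠ 0 := Nat.cast_ne_zero.mpr (n - k).factorial_ne_zero
  field_simp
  rw [← hfac]
  ring
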